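/- Let d = (d_1,...,d_n) be a non-increasing sequence of positive integers with d_1 ≥ 2 and ∑ d_i = 2n - 2c for a positive integer c. If n_1(d) > n_{≥2}(d) and c - 1 ≥ ⌈(n_1(d) - n_{≥2}(d))/2⌉, then the maximum of the domination number over all forests with degree sequence d equals ⌊n/2⌋. -/

import Mathlib

open SimpleGraph Finset

/-- The degree of a vertex `v` in a simple graph `G`. -/
noncomputable def deg {V : Type*} [Fintype V] (G : SimpleGraph V) (v : V) : ℕ :=
  Nat.card {u // G.Adj v u}

/-- The degree sequence of `G` as a multiset. -/
noncomputable def degSeq {V : Type*} [Fintype V] (G : SimpleGraph V) : Multiset ℕ :=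
  Finset.univ.val.map (deg G)

/-- `D` is a dominating set of `G`. -/
def IsDomSet {V : Type*} (G : SimpleGraph V) (D : Set V) : Prop :=
  ∀ v ∉ D, ∃ u ∈ D, G.Adj u v

/-- The domination number of `G`. -/
noncomputable def domNum {V : Type*} [Fintype V] (G : SimpleGraph V) : ℕ :=
  sInf {k | ∃ D : Set V, IsDomSet G D ∧ D.ncard = k}

/-- `I` is an independent set of `G`. -/
def IsIndepSet' {V : Type*} (G : SimpleGraph V) (I : Set V) : Prop :=
  ∀ u ∈ I, ∀ v ∈ I, ¬ G.Adj u v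

/-- The independence number of `G`. -/
noncomputable def indepNum {V : Type*} [Fintype V] (G : SimpleGraph V) : ℕ :=
  sSup {k | ∃ I : Set V, IsIndepSet' G I ∧ I.ncard = k}

/-- `v` is a support vertex of `G`: degree at least 2 with a neighbor of degree 1. -/
noncomputable def IsSupport {V : Type*} [Fintype V] (G : SimpleGraph V) (v : V) : Prop :=
  2 ≤ deg G v ∧ ∃ u, G.Adj v u ∧ deg G u = 1

namespace F10

/-- parent graph on `Fin n` from a parent map on `ℕ`. -/
def pg (n : ℕ) (q : ℕ → Option ℕ) : SimpleGraph (Fin n) :=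
  SimpleGraph.fromRel (fun a b => q ↑a = some ↑b)

variable {n : ℕ} {q : ℕ → Option ℕ}

lemma pg_adj (hq : ∀ j i, q j = some i → i < j) {a b : Fin n} :
    (pg n q).Adj a b ↔ (q ↑a = some ↑b ∨ q ↑b = some ↑a) := by
  simp only [pg, fromRel_adj]
  constructor
  · rintro ⟨-, h⟩; exact h
  · intro h
    refine ⟨?_, h⟩
    rintro rfl
    rcases h with h | h <;> exact absurd (hq _ _ h) (lt_irrefl _)

lemma pg_acyclic (hq : ∀ j i, q j = some i → i < j) : (pg n q).IsAcyclic := by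
  intro v c hc
  classical
  have hsne : c.support.toFinset.Nonempty := ⟨v, by simp [c.start_mem_support]⟩
  set m : Fin n := c.support.toFinset.max' hsne with hm
  have hmmem : m ∈ c.support := by
    have := c.support.toFinset.max'_mem hsne
    simpa using this
  have hmax : ∀ x : Fin n, x ∈ c.support → x ≤ m := by
    intro x hx
    exact c.support.toFinset.le_max' x (by simpa using hx)
  set c' := c.rotate m hmmem with hc'def
  have hc' : c'.IsCycle := hc.rotate hmmem
  have htail : ∀ x : Fin n, x ∈ c'.support.tail → x ≤ m := by
    intro x hx
    have hrot := SimpleGraph.Walk.support_rotate c m hmmem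
    exact hmax x (List.mem_of_mem_tail (hrot.mem_iff.mp hx))
  have hnn : ¬ c'.Nil := hc'.not_nil
  obtain ⟨u, hadj, p, hpeq⟩ := SimpleGraph.Walk.not_nil_iff.mp hnn
  rw [hpeq] at hc'
  rw [SimpleGraph.Walk.cons_isCycle_iff] at hc'
  obtain ⟨hpath, he⟩ := hc'
  -- last edge of p
  have hum : u ≠ m := fun h => (pg n q).irrefl (h ▸ hadj)
  have hmu : m ≠ u := fun h => hum h.symm
  obtain ⟨x, hadj2, p2, hp2⟩ := SimpleGraph.Walk.exists_eq_cons_of_ne hmu p.reverse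
  -- hadj2 : Adj m x
  have hxedge : s(m, x) ∈ p.edges := by
    have : s(m, x) ∈ p.reverse.edges := by rw [hp2]; simp
    simpa using this
  have hxsupp : x ∈ p.support := by
    have : x ∈ p.reverse.support := by rw [hp2]; simp
    simpa using this
  have husupp : u ∈ p.support := p.start_mem_support
  have htail' : ∀ y : Fin n, y ∈ p.support → y ≤ m := by
    intro y hy
    apply htail
    rw [hpeq]
    simpa using hy
  have hqu : q ↑m = some ↑u := by
    rcases (pg_adj hq).mp hadj with h | h
    · exact h
    · exact absurd (hq _ _ h) (by
        have := htail' u husupp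
        simp only [not_lt]
        exact_mod_cast this)
  have hqx : q ↑m = some ↑x := by
    rcases (pg_adj hq).mp hadj2 with h | h
    · exact h
    · exact absurd (hq _ _ h) (by
        have := htail' x hxsupp
        simp only [not_lt]
        exact_mod_cast this)
  have hux : u = x := by
    have : (↑u : ℕ) = ↑x := by rw [hqu] at hqx; exact (Option.some_injective _ hqx)
    exact Fin.ext this
  subst hux
  exact he hxedge

lemma card_filter_val (n : ℕ) (P : ℕ → Prop) [DecidablePred P] :
    (univ.filter fun u : Fin n => P ↑u).card = ((range n).filter P).card := by
  rw [Finset.card_filter, Finset.card_filter, Fin.sum_univ_eq_sum_range (fun i => if P i then 1 else 0)]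

lemma deg_pg (hq : ∀ j i, q j = some i → i < j) (j : Fin n) :
    deg (pg n q) j =
      (if (q ↑j).isSome then 1 else 0) + ((range n).filter fun i => q i = some ↑j).card := by
  classical
  have h1 : deg (pg n q) j = (univ.filter fun u : Fin n => (pg n q).Adj j u).card := by
    rw [deg, Nat.card_eq_fintype_card, Fintype.card_subtype]
  rw [h1]
  have h2 : (univ.filter fun u : Fin n => (pg n q).Adj j u)
      = (univ.filter fun u : Fin n => q ↑j = some ↑u) ∪
        (univ.filter fun u : Fin n => q ↑u = some ↑j) := by
    rw [← Finset.filter_or]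
    apply Finset.filter_congr
    intro u _
    exact pg_adj hq
  rw [h2, Finset.card_union_of_disjoint]
  · congr 1
    · -- parent part
      rcases hqj : q ↑j with _ | x
      · simp
      · have hx : x < n := lt_trans (hq _ _ hqj) j.isLt
        have h3 : (univ.filter fun u : Fin n => (some x : Option ℕ) = some ↑u) = {⟨x, hx⟩} := by
          ext u
          simp only [Finset.mem_filter, Finset.mem_univ, true_and, Finset.mem_singleton,
            Option.some_inj]
          constructor
          · intro h; exact Fin.ext h.symm
          · rintro rfl; rfl
        rw [h3, Finset.card_singleton]
        rfl
    · exact card_filter_val n (fun i => q i = some ↑j)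
  · rw [Finset.disjoint_left]
    intro u hu1 hu2
    simp only [Finset.mem_filter] at hu1 hu2
    have h1 := hq _ _ hu1.2
    have h2 := hq _ _ hu2.2
    omega

section Bounds
variable {V : Type*} [Fintype V]

lemma exists_adj_of_deg_pos {G : SimpleGraph V} {v : V} (h : 1 ≤ deg G v) : ∃ u, G.Adj v u := by
  by_contra hno
  push_neg at hno
  have : IsEmpty {u // G.Adj v u} := ⟨fun ⟨u, hu⟩ => hno u hu⟩
  rw [deg, Nat.card_of_isEmpty] at h
  omega

lemma domNum_le_ncard {G : SimpleGraph V} {D : Set V} (hD : IsDomSet G D) :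
    domNum G ≤ D.ncard :=
  Nat.sInf_le ⟨D, hD, rfl⟩

lemma ore (G : SimpleGraph V) (h : ∀ v, ∃ u, G.Adj v u) :
    domNum G ≤ Fintype.card V / 2 := by
  classical
  obtain ⟨I, hImem, hImax⟩ := Finset.exists_max_image
    ((univ : Finset (Finset V)).filter (fun s : Finset V => IsIndepSet' G (↑s : Set V))) (fun s : Finset V => s.card)
    ⟨∅, by simp [IsIndepSet']⟩
  rw [Finset.mem_filter] at hImem
  have hIindep : IsIndepSet' G ↑I := hImem.2
  have dom1 : IsDomSet G ↑I := by
    intro v hv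
    by_contra hnd
    push_neg at hnd
    have hins : IsIndepSet' G ↑(insert v I) := by
      intro a ha b hb hab
      simp only [Finset.coe_insert, Set.mem_insert_iff, Finset.mem_coe] at ha hb
      rcases ha with rfl | ha
      · rcases hb with rfl | hb
        · exact G.irrefl hab
        · exact hnd b hb (G.adj_symm hab)
      · rcases hb with rfl | hb
        · exact hnd a ha hab
        · exact hIindep a ha b hb hab
    have hle := hImax (insert v I) (Finset.mem_filter.mpr ⟨Finset.mem_univ _, hins⟩)
    rw [Finset.card_insert_of_notMem (fun hvi => hv (Finset.mem_coe.mpr hvi))] at hle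
    omega
  have dom2 : IsDomSet G ↑(Iᶜ) := by
    intro v hv
    have hvI : v ∈ I := by
      by_contra hvn
      exact hv (by simpa using hvn)
    obtain ⟨u, hu⟩ := h v
    have huI : u ∉ I := fun huI => hIindep v hvI u huI hu
    exact ⟨u, by simpa using huI, G.adj_symm hu⟩
  have h1 : domNum G ≤ I.card := by
    simpa [Set.ncard_coe_finset] using domNum_le_ncard dom1
  have h2 : domNum G ≤ (Iᶜ : Finset V).card := by
    have := domNum_le_ncard dom2
    rwa [Set.ncard_coe_finset] at this
  have h3 := Finset.card_add_card_compl I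
  omega

lemma domNum_lower (G : SimpleGraph V) (k : ℕ) (v : Fin k → V) (S : Fin k → Set V)
    (hv : ∀ i, v i ∈ S i) (hnb : ∀ i x, G.Adj (v i) x → x ∈ S i)
    (hdisj : ∀ i j, i ≠ j → ∀ x, x ∈ S i → x ∉ S j) :
    k ≤ domNum G := by
  classical
  apply le_csInf
  · exact ⟨Fintype.card V, Set.univ, fun v hv => absurd (Set.mem_univ v) hv, by
      simp [Set.ncard_univ, Nat.card_eq_fintype_card]⟩
  rintro m ⟨D, hD, rfl⟩
  have hpick : ∀ i : Fin k, ∃ x, x ∈ D ∧ x ∈ S i := by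
    intro i
    by_cases hvD : v i ∈ D
    · exact ⟨v i, hvD, hv i⟩
    · obtain ⟨u, huD, hu⟩ := hD (v i) hvD
      exact ⟨u, huD, hnb i u (G.adj_symm hu)⟩
  choose f hfD hfS using hpick
  have hinj : Function.Injective f := by
    intro i j hij
    by_contra hne
    exact hdisj i j hne (f i) (hfS i) (hij ▸ hfS j)
  have : Fintype.card (Fin k) ≤ Fintype.card D := by
    exact Fintype.card_le_of_injective (fun i => ⟨f i, hfD i⟩)
      (fun i j hij => hinj (congrArg Subtype.val hij))
  rw [Fintype.card_fin] at this
  rwa [Set.ncard_eq_toFinset_card', Set.toFinset_card] at *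

end Bounds

section Realize

/-- degree of `j` in the parent map `P`, with children counted in `range B`. -/
def Pdeg (P : ℕ → Option ℕ) (B j : ℕ) : ℕ :=
  (if (P j).isSome then 1 else 0) + ((range B).filter fun i => P i = some j).card

lemma realize (B : ℕ) : ∀ (e : ℕ → ℕ) (k : ℕ),
    (∀ i j, i ≤ j → j < B → e j ≤ e i) →
    (∑ i ∈ range B, e i) + 2 * k = 2 * B →
    ((range B).filter fun i => e i = 0).card < k →
    ∃ P : ℕ → Option ℕ, (∀ j, B ≤ j → P j = none) ∧
      (∀ j i, P j = some i → i < j) ∧ (∀ j, j < B → Pdeg P B j = e j) := by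
  induction B with
  | zero =>
    intro e k _ hsum hz
    simp only [range_zero, sum_empty, filter_empty, card_empty] at hsum hz
    omega
  | succ m ih =>
    intro e k hmono hsum hz
    by_cases h0 : e m = 0
    · -- last vertex isolated
      have hmemf : m ∈ (range (m+1)).filter fun i => e i = 0 := by
        simp [h0]
      have hk2 : 2 ≤ k := by
        have := Finset.card_pos.mpr ⟨m, hmemf⟩
        omega
      have hfeq : (range (m+1)).filter (fun i => e i = 0)
          = insert m ((range m).filter fun i => e i = 0) := by
        rw [Finset.range_add_one, Finset.filter_insert, if_pos h0]
      have hnm : m ∉ (range m).filter fun i => e i = 0 := by simp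
      rw [hfeq, Finset.card_insert_of_notMem hnm] at hz
      have hsum' : (∑ i ∈ range m, e i) + 2 * (k - 1) = 2 * m := by
        rw [Finset.sum_range_succ] at hsum; omega
      obtain ⟨P, hPs, hPlt, hPdeg⟩ := ih e (k - 1)
        (fun i j hij hj => hmono i j hij (by omega)) hsum' (by omega)
      refine ⟨P, fun j hj => hPs j (by omega), hPlt, ?_⟩
      intro j hj
      have hfil : (range (m+1)).filter (fun i => P i = some j)
          = (range m).filter fun i => P i = some j := by
        rw [Finset.range_add_one, Finset.filter_insert, if_neg]
        simp [hPs m le_rfl]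
      rcases Nat.lt_or_ge j m with hjm | hjm
      · have := hPdeg j hjm
        unfold Pdeg at this ⊢
        rw [hfil]
        exact this
      · have hjm' : j = m := by omega
        subst hjm'
        unfold Pdeg
        rw [hPs j le_rfl, hfil]
        have : (range j).filter (fun i => P i = some j) = ∅ := by
          rw [Finset.filter_eq_empty_iff]
          intro i hi hPi
          have := hPlt i j hPi
          simp only [Finset.mem_range] at hi
          omega
        rw [this]
        simpa using h0.symm
    · -- all degrees in range are ≥ 1
      have hpos : ∀ i, i < m + 1 → 1 ≤ e i := by
        intro i hi
        have := hmono i m (by omega) (by omega)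
        omega
      have hk1 : 1 ≤ k := by omega
      by_cases h1 : e 0 ≤ 1
      · -- all ones: perfect matching
        have hall : ∀ i, i < m + 1 → e i = 1 := by
          intro i hi
          have := hmono 0 i (Nat.zero_le _) hi
          have := hpos i hi
          omega
        have hB2k : m + 1 = 2 * k := by
          have : ∑ i ∈ range (m+1), e i = m + 1 := by
            rw [Finset.sum_congr rfl (fun i hi => hall i (Finset.mem_range.mp hi))]
            simp [mul_comm]
          omega
        refine ⟨fun j => if j < m + 1 ∧ j % 2 = 1 then some (j - 1) else none,
          ?_, ?_, ?_⟩
        · intro j hj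
          beta_reduce
          rw [if_neg]; omega
        · intro j i hij
          beta_reduce at hij
          by_cases h : j < m + 1 ∧ j % 2 = 1
          · rw [if_pos h] at hij
            have : i = j - 1 := by
              have := Option.some_injective _ hij
              omega
            omega
          · rw [if_neg h] at hij; exact absurd hij (by simp)
        · intro j hj
          unfold Pdeg
          beta_reduce
          by_cases hodd : j % 2 = 1
          · rw [if_pos (show j < m + 1 ∧ j % 2 = 1 from ⟨hj, hodd⟩)]
            have hfe : (range (m+1)).filter
                (fun i => (if i < m + 1 ∧ i % 2 = 1 then some (i - 1) else none) = some j) = ∅ := by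
              rw [Finset.filter_eq_empty_iff]
              intro i hi
              simp only [Finset.mem_range] at hi
              beta_reduce
              by_cases h : i < m + 1 ∧ i % 2 = 1
              · rw [if_pos h]
                intro hc
                have : i - 1 = j := by
                  have := Option.some_injective _ hc; omega
                omega
              · rw [if_neg h]; simp
            rw [hfe]
            simp [hall j hj]
          · rw [if_neg (show ¬(j < m + 1 ∧ j % 2 = 1) by omega)]
            have hfe : (range (m+1)).filter
                (fun i => (if i < m + 1 ∧ i % 2 = 1 then some (i - 1) else none) = some j)
                = {j + 1} := by
              ext i
              simp only [Finset.mem_filter, Finset.mem_range, Finset.mem_singleton]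
              constructor
              · rintro ⟨hi, hqi⟩
                beta_reduce at hqi
                by_cases h : i < m + 1 ∧ i % 2 = 1
                · rw [if_pos h] at hqi
                  have := Option.some_injective _ hqi
                  omega
                · rw [if_neg h] at hqi; exact absurd hqi (by simp)
              · rintro rfl
                have hjb : j + 1 < m + 1 := by omega
                refine ⟨hjb, ?_⟩
                beta_reduce
                rw [if_pos (show j + 1 < m + 1 ∧ (j + 1) % 2 = 1 from ⟨hjb, by omega⟩)]
                have : j + 1 - 1 = j := by omega
                rw [this]
            rw [hfe]
            simp [hall j hj]
      · -- main case : e 0 ≥ 2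
        push_neg at h1
        have hem : e m = 1 := by
          by_contra hc
          have h2m : 2 ≤ e m := by have := hpos m (by omega); omega
          have : ∀ i ∈ range (m+1), 2 ≤ e i := by
            intro i hi
            have := hmono i m (by simpa using Nat.lt_succ_iff.mp (Finset.mem_range.mp hi)) (by omega)
            omega
          have hge : 2 * (m+1) ≤ ∑ i ∈ range (m+1), e i := by
            calc 2 * (m+1) = ∑ _i ∈ range (m+1), 2 := by simp [mul_comm]
            _ ≤ _ := Finset.sum_le_sum this
          omega
        set F := (range (m+1)).filter (fun i => e i = e 0) with hF
        have hF0 : 0 ∈ F := by simp [hF]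
        set t := F.max' ⟨0, hF0⟩ with ht
        have htF : t ∈ F := F.max'_mem _
        have htlt : t < m + 1 := by
          have := Finset.mem_filter.mp htF
          simpa using this.1
        have het : e t = e 0 := (Finset.mem_filter.mp htF).2
        have htm : t < m := by
          rcases Nat.lt_or_ge t m with h | h
          · exact h
          · exfalso
            have : t = m := by omega
            rw [this, hem] at het
            omega
        have htmax : ∀ i, t < i → i < m + 1 → e i < e 0 := by
          intro i hti him
          rcases Nat.lt_or_ge (e i) (e 0) with h | h
          · exact h
          · exfalso
            have : e i = e 0 := by
              have := hmono 0 i (Nat.zero_le _) him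
              omega
            have : i ∈ F := by simp [hF, him, this]
            have := F.le_max' i this
            omega
        set e' : ℕ → ℕ := fun i => if i = t then e 0 - 1 else e i with he'
        have hmono' : ∀ i j, i ≤ j → j < m → e' j ≤ e' i := by
          intro i j hij hjm
          simp only [he']
          by_cases hjt : j = t
          · subst hjt
            by_cases hit : i = t
            · simp [hit]
            · rw [if_pos rfl, if_neg hit]
              have : e t ≤ e i := hmono i t hij (by omega)
              omega
          · rw [if_neg hjt]
            by_cases hit : i = t
            · rw [if_pos hit]
              have hti : t < j := by omega
              have := htmax j hti (by omega)
              omega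
            · rw [if_neg hit]
              exact hmono i j hij (by omega)
        have hsum' : (∑ i ∈ range m, e' i) + 2 * k = 2 * m := by
          have htr : t ∈ range m := Finset.mem_range.mpr htm
          have h1' := Finset.add_sum_erase (range m) e' htr
          have h2' := Finset.add_sum_erase (range m) e htr
          have hcong : ∑ x ∈ (range m).erase t, e' x = ∑ x ∈ (range m).erase t, e x := by
            apply Finset.sum_congr rfl
            intro x hx
            have : x ≠ t := (Finset.mem_erase.mp hx).1
            simp [he', this]
          have he't : e' t = e 0 - 1 := by simp [he']
          have hsm : ∑ i ∈ range (m+1), e i = (∑ i ∈ range m, e i) + 1 := by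
            rw [Finset.sum_range_succ, hem]
          omega
        have hz' : ((range m).filter fun i => e' i = 0).card < k := by
          have : (range m).filter (fun i => e' i = 0) = ∅ := by
            rw [Finset.filter_eq_empty_iff]
            intro i hi
            simp only [Finset.mem_range] at hi
            simp only [he']
            by_cases hit : i = t
            · rw [if_pos hit]; omega
            · rw [if_neg hit]
              have := hpos i (by omega)
              omega
          rw [this]
          rw [Finset.card_empty]; exact hk1
        obtain ⟨P', hs', hlt', hdeg'⟩ := ih e' k hmono' hsum' hz'
        refine ⟨fun j => if j = m then some t else P' j, ?_, ?_, ?_⟩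
        · intro j hj
          beta_reduce
          rw [if_neg (show ¬ j = m by omega)]
          exact hs' j (by omega)
        · intro j i hij
          beta_reduce at hij
          by_cases hjm : j = m
          · rw [if_pos hjm] at hij
            have : t = i := Option.some_injective _ hij
            omega
          · rw [if_neg hjm] at hij
            exact hlt' j i hij
        · intro j hj
          unfold Pdeg
          beta_reduce
          by_cases hjm : j = m
          · subst hjm
            rw [if_pos rfl]
            have hfe : (range (j+1)).filter
                (fun i => (if i = j then some t else P' i) = some j) = ∅ := by
              rw [Finset.filter_eq_empty_iff]
              intro i hi
              simp only [Finset.mem_range] at hi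
              beta_reduce
              by_cases hij : i = j
              · rw [if_pos hij]
                intro hc
                have := Option.some_injective _ hc
                omega
              · rw [if_neg hij]
                intro hc
                have := hlt' i j hc
                omega
            rw [hfe]
            simpa using hem.symm
          · have hjm' : j < m := by omega
            rw [if_neg hjm]
            have hsplit : (range (m+1)).filter
                (fun i => (if i = m then some t else P' i) = some j)
                = if t = j then insert m ((range m).filter fun i => P' i = some j)
                  else (range m).filter fun i => P' i = some j := by
              rw [Finset.range_add_one, Finset.filter_insert, if_pos rfl]
              have hcong : (range m).filter (fun i => (if i = m then some t else P' i) = some j)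
                  = (range m).filter fun i => P' i = some j := by
                apply Finset.filter_congr
                intro x hx
                rw [if_neg (by simp only [Finset.mem_range] at hx; omega)]
              by_cases htj : t = j
              · rw [if_pos (by rw [htj]), if_pos htj, hcong]
              · rw [if_neg (fun hc => htj (Option.some_injective _ hc)), if_neg htj, hcong]
            rw [hsplit]
            have hPdj := hdeg' j hjm'
            unfold Pdeg at hPdj
            set x := (if (P' j).isSome = true then 1 else 0) with hx
            by_cases htj : t = j
            · rw [if_pos htj, Finset.card_insert_of_notMem (by simp)]
              have he'j : e' j = e 0 - 1 := by
                have hjt : j = t := htj.symm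
                simp [he', hjt]
              have hej : e j = e 0 := by rw [← htj, het]
              rw [he'j] at hPdj
              omega
            · rw [if_neg htj]
              have he'j : e' j = e j := by
                have hjt : ¬ j = t := fun h => htj h.symm
                simp [he', hjt]
              omega
end Realize

end F10

theorem stmt_10 (n c : ℕ) (hc : 0 < c) (d : Fin n → ℕ) (hmono : Antitone d)
    (hpos : ∀ i, 0 < d i) (hsum : ∑ i, d i = 2 * n - 2 * c)
    (hd1 : ∀ i : Fin n, (i : ℕ) = 0 → 2 ≤ d i)
    (h12 : (Finset.univ.filter fun i => 2 ≤ d i).card < (Finset.univ.filter fun i => d i = 1).card)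
    (hcs : ((Finset.univ.filter fun i => d i = 1).card - (Finset.univ.filter fun i => 2 ≤ d i).card) ⌈/⌉ 2 ≤ c - 1) :
    IsGreatest {k | ∃ G : SimpleGraph (Fin n), G.IsAcyclic ∧
        degSeq G = Finset.univ.val.map d ∧ domNum G = k}
      (n / 2) := by
  classical
  -- upper bound for arbitrary G with this degree sequence
  have upper : ∀ G : SimpleGraph (Fin n), degSeq G = Finset.univ.val.map d →
      domNum G ≤ n / 2 := by
    intro G hds
    have hmd : ∀ v : Fin n, ∃ u, G.Adj v u := by
      intro v
      apply F10.exists_adj_of_deg_pos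
      have hmem : deg G v ∈ degSeq G := Multiset.mem_map_of_mem _ (Finset.mem_univ_val _)
      rw [hds] at hmem
      obtain ⟨i, _, hi⟩ := Multiset.mem_map.mp hmem
      rw [← hi]
      exact hpos i
    have := F10.ore G hmd
    rwa [Fintype.card_fin] at this
  -- basic counting
  set B := (Finset.univ.filter fun i : Fin n => 2 ≤ d i).card with hBdef
  set N1 := (Finset.univ.filter fun i : Fin n => d i = 1).card with hN1def
  have hpart : B + N1 = n := by
    have hco : (Finset.univ.filter fun i : Fin n => d i = 1)
        = (Finset.univ.filter fun i : Fin n => ¬ 2 ≤ d i) := by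
      apply Finset.filter_congr
      intro i _
      have := hpos i
      constructor <;> (intro h; omega)
    rw [hN1def, hco, hBdef, Finset.card_filter_add_card_filter_not, Finset.card_univ,
      Fintype.card_fin]
  have hn0 : 0 < n := by omega
  have hBi : ∀ i : Fin n, 2 ≤ d i ↔ (i : ℕ) < B := by
    intro i
    constructor
    · intro h2
      have hsub : Finset.Iic i ⊆ Finset.univ.filter fun j : Fin n => 2 ≤ d j := by
        intro j hj
        simp only [Finset.mem_Iic] at hj
        simp only [Finset.mem_filter, Finset.mem_univ, true_and]
        exact le_trans h2 (hmono hj)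
      have := Finset.card_le_card hsub
      rw [Fin.card_Iic] at this
      omega
    · intro hiB
      by_contra h2
      have hsub : (Finset.univ.filter fun j : Fin n => 2 ≤ d j) ⊆ Finset.Iio i := by
        intro j hj
        simp only [Finset.mem_filter, Finset.mem_univ, true_and] at hj
        simp only [Finset.mem_Iio]
        by_contra hij
        push_neg at hij
        exact h2 (le_trans hj (hmono hij))
      have := Finset.card_le_card hsub
      rw [Fin.card_Iio] at this
      omega
  have hB1 : 1 ≤ B := by
    have := (hBi ⟨0, hn0⟩).mp (hd1 ⟨0, hn0⟩ rfl)
    omega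
  have h2B : 2 * B < n := by omega
  -- the degree function on ℕ
  set d! : ℕ → ℕ := fun t => if h : t < n then d ⟨t, h⟩ else 0 with hd!def
  have hd!eq : ∀ i : Fin n, d! (i : ℕ) = d i := by
    intro i
    simp only [hd!def, i.isLt, dif_pos, Fin.eta]
  have hd!big : ∀ t, t < B → 2 ≤ d! t := by
    intro t ht
    have htn : t < n := by omega
    have := (hBi ⟨t, htn⟩).mpr (by simpa using ht)
    simpa only [hd!def, dif_pos htn] using this
  have hd!one : ∀ t, B ≤ t → t < n → d! t = 1 := by
    intro t htB htn
    have h2 : ¬ 2 ≤ d ⟨t, htn⟩ := fun h => by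
      have := (hBi ⟨t, htn⟩).mp h
      simp only at this
      omega
    have := hpos ⟨t, htn⟩
    simp only [hd!def, dif_pos htn]
    omega
  have hd!mono : ∀ t u, t ≤ u → u < n → d! u ≤ d! t := by
    intro t u htu hun
    have htn : t < n := by omega
    simp only [hd!def, dif_pos htn, dif_pos hun]
    exact hmono (show (⟨t, htn⟩ : Fin n) ≤ ⟨u, hun⟩ from htu)
  -- sum bookkeeping
  set S := ∑ t ∈ Finset.range B, d! t with hSdef
  have hsum2 : ∑ i : Fin n, d i = ∑ t ∈ Finset.range n, d! t := by
    rw [← Fin.sum_univ_eq_sum_range d!]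
    exact Finset.sum_congr rfl (fun i _ => (hd!eq i).symm)
  have hsplitS : ∑ t ∈ Finset.range n, d! t = S + (n - B) := by
    have hBle : B ≤ n := by omega
    have h1 : ∑ t ∈ Finset.Ico 0 B, d! t + ∑ t ∈ Finset.Ico B n, d! t
        = ∑ t ∈ Finset.Ico 0 n, d! t := Finset.sum_Ico_consecutive d! (Nat.zero_le B) hBle
    have h2 : ∑ t ∈ Finset.Ico B n, d! t = n - B := by
      have : ∀ t ∈ Finset.Ico B n, d! t = 1 := by
        intro t ht
        simp only [Finset.mem_Ico] at ht
        exact hd!one t ht.1 ht.2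
      rw [Finset.sum_congr rfl this, Finset.sum_const, Nat.card_Ico, smul_eq_mul, mul_one]
    rw [← Finset.range_eq_Ico, ← Finset.range_eq_Ico] at h1
    rw [← h1, h2, ← hSdef]
  have h2cn : 2 * c ≤ 2 * n := by
    by_contra hcn
    push_neg at hcn
    have h0 : 2 * n - 2 * c = 0 := by omega
    rw [h0] at hsum
    have : d ⟨0, hn0⟩ ≤ ∑ i : Fin n, d i :=
      Finset.single_le_sum (fun i _ => Nat.zero_le (d i)) (Finset.mem_univ _)
    have := hd1 ⟨0, hn0⟩ rfl
    omega
  have hS : S + (n - B) + 2 * c = 2 * n := by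
    rw [← hsplitS, ← hsum2]
    omega
  -- parity bookkeeping
  set r := n - 2 * B with hrdef
  have hrn : 2 * B + r = n := by omega
  have hr1 : 1 ≤ r := by omega
  set ρ := r % 2 with hρdef
  set m2 := (r - ρ) / 2 with hm2def
  have hrm2 : r = 2 * m2 + ρ ∧ ρ ≤ 1 := by
    constructor <;> omega
  have hcck : (r + 1) / 2 + 1 ≤ c := by
    rw [Nat.ceilDiv_eq_add_pred_div] at hcs
    have : N1 - B = r := by omega
    rw [this] at hcs
    omega
  set k := c - m2 with hkdef
  have hkc : k + m2 = c := by omega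
  have hk1ρ : 1 + ρ ≤ k := by omega
  -- inner degree function
  set e : ℕ → ℕ := fun t => if t < B then d! t - 1 - (if ρ = 1 ∧ t = B - 1 then 1 else 0) else 0
    with hedef
  have heval : ∀ t, t < B → e t + 1 + (if ρ = 1 ∧ t = B - 1 then 1 else 0) = d! t := by
    intro t ht
    have := hd!big t ht
    simp only [hedef, if_pos ht]
    split_ifs <;> omega
  have hesum : (∑ t ∈ Finset.range B, e t) + B + ρ = S := by
    have h1 : ∑ t ∈ Finset.range B, (e t + 1 + (if ρ = 1 ∧ t = B - 1 then 1 else 0)) = S := by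
      rw [hSdef]
      exact Finset.sum_congr rfl (fun t ht => heval t (Finset.mem_range.mp ht))
    rw [Finset.sum_add_distrib, Finset.sum_add_distrib] at h1
    have h2 : ∑ _t ∈ Finset.range B, 1 = B := by simp
    have h3 : (∑ t ∈ Finset.range B, if ρ = 1 ∧ t = B - 1 then 1 else 0) = ρ := by
      by_cases hρ1 : ρ = 1
      · simp only [hρ1, true_and]
        rw [Finset.sum_ite_eq' (Finset.range B) (B - 1) (fun _ => 1)]
        rw [if_pos (Finset.mem_range.mpr (by omega))]
      · have hρ0 : ρ = 0 := by omega
        simp [hρ1, hρ0]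
    omega
  -- apply realization
  have hmono_e : ∀ i j, i ≤ j → j < B → e j ≤ e i := by
    intro i j hij hj
    have hi : i < B := by omega
    have h2i := hd!big i hi
    have h2j := hd!big j hj
    have hji := hd!mono i j hij (by omega)
    simp only [hedef, if_pos hi, if_pos hj]
    split_ifs <;> omega
  have hsum_e : (∑ t ∈ Finset.range B, e t) + 2 * k = 2 * B := by omega
  have hz_e : ((Finset.range B).filter fun t => e t = 0).card < k := by
    have hsub : ((Finset.range B).filter fun t => e t = 0) ⊆ {B - 1} := by
      intro t ht
      simp only [Finset.mem_filter, Finset.mem_range] at ht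
      obtain ⟨htB, hte⟩ := ht
      simp only [hedef, if_pos htB] at hte
      have := hd!big t htB
      simp only [Finset.mem_singleton]
      by_cases hcnd : ρ = 1 ∧ t = B - 1
      · exact hcnd.2
      · rw [if_neg hcnd] at hte
        omega
    have := Finset.card_le_card hsub
    rw [Finset.card_singleton] at this
    by_cases hρ1 : ρ = 1
    · omega
    · have hfe : ((Finset.range B).filter fun t => e t = 0) = ∅ := by
        rw [Finset.filter_eq_empty_iff]
        intro t ht
        simp only [Finset.mem_range] at ht
        have := hd!big t ht
        simp only [hedef, if_pos ht, if_neg (fun hcnd : ρ = 1 ∧ t = B - 1 => hρ1 hcnd.1)]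
        omega
      rw [hfe, Finset.card_empty]
      omega
  obtain ⟨P, hPsupp, hPlt, hPdeg⟩ := F10.realize B e k hmono_e hsum_e hz_e
  -- the global parent map
  set q : ℕ → Option ℕ := fun j =>
    if j < B then P j
    else if j < 2 * B then some (j - B)
    else if j = 2 * B ∧ ρ = 1 then some (B - 1)
    else if (j - (2 * B + ρ)) % 2 = 1 then some (j - 1) else none
    with hqdef
  have hqP : ∀ i, i < B → q i = P i := by
    intro i hi
    simp only [hqdef]
    rw [if_pos hi]
  have hq2 : ∀ i, B ≤ i → i < 2 * B → q i = some (i - B) := by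
    intro i h1 h2
    simp only [hqdef]
    rw [if_neg (by omega), if_pos h2]
  have hq3 : ρ = 1 → q (2 * B) = some (B - 1) := by
    intro hρ1
    simp only [hqdef]
    rw [if_neg (by omega), if_neg (by omega)]
    rw [if_pos (show True ∧ ρ = 1 from ⟨trivial, hρ1⟩)]
  have hq4odd : ∀ i, 2 * B + ρ ≤ i → (i - (2 * B + ρ)) % 2 = 1 → q i = some (i - 1) := by
    intro i h1 h2
    have hig : 2 * B < i := by omega
    simp only [hqdef]
    rw [if_neg (by omega), if_neg (by omega), if_neg (by omega), if_pos h2]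
  have hq4even : ∀ i, 2 * B + ρ ≤ i → (i - (2 * B + ρ)) % 2 = 0 → q i = none := by
    intro i h1 h2
    simp only [hqdef]
    rw [if_neg (by omega), if_neg (by omega), if_neg (by omega), if_neg (by omega)]
  have hqlt : ∀ j i, q j = some i → i < j := by
    intro j i h
    simp only [hqdef] at h
    split_ifs at h with h1 h2 h3 h4 <;>
      first
        | exact hPlt j i h
        | (have := Option.some_injective _ h; omega)
        | exact absurd h (by simp)
  -- children counts
  have hchB : ∀ j, j < B → ((Finset.range n).filter fun i => q i = some j)
      = if ρ = 1 ∧ j = B - 1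
        then insert (2 * B) (insert (B + j) ((Finset.range B).filter fun i => P i = some j))
        else insert (B + j) ((Finset.range B).filter fun i => P i = some j) := by
    intro j hj
    by_cases hcnd : ρ = 1 ∧ j = B - 1
    · rw [if_pos hcnd]
      ext i
      simp only [Finset.mem_filter, Finset.mem_range, Finset.mem_insert]
      constructor
      · rintro ⟨hin, hqi⟩
        by_cases hi1 : i < B
        · rw [hqP i hi1] at hqi
          right; right; exact ⟨hi1, hqi⟩
        · by_cases hi2 : i < 2 * B
          · rw [hq2 i (by omega) hi2] at hqi
            have := Option.some_injective _ hqi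
            right; left; omega
          · by_cases hi3 : i = 2 * B ∧ ρ = 1
            · left; exact hi3.1
            · have hige : 2 * B + ρ ≤ i := by omega
              rcases Nat.even_or_odd' (i - (2 * B + ρ)) with ⟨l, hl | hl⟩
              · rw [hq4even i hige (by omega)] at hqi
                exact absurd hqi (by simp)
              · rw [hq4odd i hige (by omega)] at hqi
                have := Option.some_injective _ hqi
                omega
      · intro hmem
        rcases hmem with rfl | rfl | hPm
        · refine ⟨by omega, ?_⟩
          rw [hq3 hcnd.1]
          congr 1
          omega
        · refine ⟨by omega, ?_⟩
          rw [hq2 (B + j) (by omega) (by omega)]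
          congr 1
          omega
        · obtain ⟨hiB, hPi⟩ := hPm
          exact ⟨by omega, by rw [hqP i hiB]; exact hPi⟩
    · rw [if_neg hcnd]
      ext i
      simp only [Finset.mem_filter, Finset.mem_range, Finset.mem_insert]
      constructor
      · rintro ⟨hin, hqi⟩
        by_cases hi1 : i < B
        · rw [hqP i hi1] at hqi
          right; exact ⟨hi1, hqi⟩
        · by_cases hi2 : i < 2 * B
          · rw [hq2 i (by omega) hi2] at hqi
            have := Option.some_injective _ hqi
            left; omega
          · by_cases hi3 : i = 2 * B ∧ ρ = 1
            · exfalso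
              rw [hi3.1, hq3 hi3.2] at hqi
              have := Option.some_injective _ hqi
              exact hcnd ⟨hi3.2, by omega⟩
            · have hige : 2 * B + ρ ≤ i := by omega
              rcases Nat.even_or_odd' (i - (2 * B + ρ)) with ⟨l, hl | hl⟩
              · rw [hq4even i hige (by omega)] at hqi
                exact absurd hqi (by simp)
              · rw [hq4odd i hige (by omega)] at hqi
                have := Option.some_injective _ hqi
                omega
      · intro hmem
        rcases hmem with rfl | hPm
        · refine ⟨by omega, ?_⟩
          rw [hq2 (B + j) (by omega) (by omega)]
          congr 1
          omega
        · obtain ⟨hiB, hPi⟩ := hPm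
          exact ⟨by omega, by rw [hqP i hiB]; exact hPi⟩
  have hch_mid : ∀ j, B ≤ j → j < 2 * B + ρ →
      ((Finset.range n).filter fun i => q i = some j) = ∅ := by
    intro j hjB hj2
    rw [Finset.filter_eq_empty_iff]
    intro i hin
    simp only [Finset.mem_range] at hin
    by_cases hi1 : i < B
    · rw [hqP i hi1]
      intro hqi
      have := hPlt i j hqi
      omega
    · by_cases hi2 : i < 2 * B
      · rw [hq2 i (by omega) hi2]
        intro hqi
        have := Option.some_injective _ hqi
        omega
      · by_cases hi3 : i = 2 * B ∧ ρ = 1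
        · rw [hi3.1, hq3 hi3.2]
          intro hqi
          have := Option.some_injective _ hqi
          omega
        · have hige : 2 * B + ρ ≤ i := by omega
          rcases Nat.even_or_odd' (i - (2 * B + ρ)) with ⟨l, hl | hl⟩
          · rw [hq4even i hige (by omega)]
            simp
          · rw [hq4odd i hige (by omega)]
            intro hqi
            have := Option.some_injective _ hqi
            omega
  have hch4e : ∀ j, 2 * B + ρ ≤ j → j < n → (j - (2 * B + ρ)) % 2 = 0 →
      ((Finset.range n).filter fun i => q i = some j) = {j + 1} := by
    intro j hjge hjn hjev
    have hj1n : j + 1 < n := by omega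
    ext i
    simp only [Finset.mem_filter, Finset.mem_range, Finset.mem_singleton]
    constructor
    · rintro ⟨hin, hqi⟩
      by_cases hi1 : i < B
      · rw [hqP i hi1] at hqi
        have := hPlt i j hqi
        omega
      · by_cases hi2 : i < 2 * B
        · rw [hq2 i (by omega) hi2] at hqi
          have := Option.some_injective _ hqi
          omega
        · by_cases hi3 : i = 2 * B ∧ ρ = 1
          · rw [hi3.1, hq3 hi3.2] at hqi
            have := Option.some_injective _ hqi
            omega
          · have hige : 2 * B + ρ ≤ i := by omega
            rcases Nat.even_or_odd' (i - (2 * B + ρ)) with ⟨l, hl | hl⟩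
            · rw [hq4even i hige (by omega)] at hqi
              exact absurd hqi (by simp)
            · rw [hq4odd i hige (by omega)] at hqi
              have := Option.some_injective _ hqi
              omega
    · rintro rfl
      refine ⟨hj1n, ?_⟩
      rw [hq4odd (j + 1) (by omega) (by omega)]
      simp
  have hch4o : ∀ j, 2 * B + ρ ≤ j → (j - (2 * B + ρ)) % 2 = 1 →
      ((Finset.range n).filter fun i => q i = some j) = ∅ := by
    intro j hjge hjodd
    rw [Finset.filter_eq_empty_iff]
    intro i hin
    simp only [Finset.mem_range] at hin
    by_cases hi1 : i < B
    · rw [hqP i hi1]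
      intro hqi
      have := hPlt i j hqi
      omega
    · by_cases hi2 : i < 2 * B
      · rw [hq2 i (by omega) hi2]
        intro hqi
        have := Option.some_injective _ hqi
        omega
      · by_cases hi3 : i = 2 * B ∧ ρ = 1
        · rw [hi3.1, hq3 hi3.2]
          intro hqi
          have := Option.some_injective _ hqi
          omega
        · have hige : 2 * B + ρ ≤ i := by omega
          rcases Nat.even_or_odd' (i - (2 * B + ρ)) with ⟨l, hl | hl⟩
          · rw [hq4even i hige (by omega)]
            simp
          · rw [hq4odd i hige (by omega)]
            intro hqi
            have := Option.some_injective _ hqi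
            omega
  -- degrees of the constructed graph
  set G := F10.pg n q with hGdef
  have hdeg : ∀ j : Fin n, deg G j = d j := by
    intro j
    rw [hGdef, F10.deg_pg hqlt]
    by_cases hz1 : (j : ℕ) < B
    · rw [hchB _ hz1, hqP _ hz1]
      have hPd := hPdeg (j : ℕ) hz1
      unfold F10.Pdeg at hPd
      have hBj : B + (j : ℕ) ∉ (Finset.range B).filter fun i => P i = some (j : ℕ) := by
        simp only [Finset.mem_filter, Finset.mem_range]
        omega
      have hd2 := hd!big _ hz1
      have hdj : d! (j : ℕ) = d j := hd!eq j
      set x := (if (P (j : ℕ)).isSome = true then 1 else 0) with hxdef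
      set C := ((Finset.range B).filter fun i => P i = some (j : ℕ)).card with hCdef
      have hev := heval (j : ℕ) hz1
      by_cases hcnd : ρ = 1 ∧ (j : ℕ) = B - 1
      · rw [if_pos hcnd, Finset.card_insert_of_notMem (by
          simp only [Finset.mem_insert, Finset.mem_filter, Finset.mem_range]
          push_neg
          constructor
          · omega
          · intro h; omega),
          Finset.card_insert_of_notMem hBj]
        rw [if_pos hcnd] at hev
        omega
      · rw [if_neg hcnd, Finset.card_insert_of_notMem hBj]
        rw [if_neg hcnd] at hev
        omega
    · have hdj1 : d j = 1 := by
        have h2 : ¬ 2 ≤ d j := fun h => hz1 ((hBi j).mp h)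
        have := hpos j
        omega
      rw [hdj1]
      by_cases hz2 : (j : ℕ) < 2 * B
      · rw [hq2 _ (by omega) hz2, hch_mid _ (by omega) (by omega), Finset.card_empty]
        rfl
      · by_cases hz3 : (j : ℕ) = 2 * B ∧ ρ = 1
        · rw [hz3.1, hq3 hz3.2, hch_mid _ (by omega) (by omega), Finset.card_empty]
          rfl
        · have hige : 2 * B + ρ ≤ (j : ℕ) := by omega
          rcases Nat.even_or_odd' ((j : ℕ) - (2 * B + ρ)) with ⟨l, hl | hl⟩
          · rw [hq4even _ hige (by omega), hch4e _ hige j.isLt (by omega),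
              Finset.card_singleton]
            rfl
          · rw [hq4odd _ hige (by omega), hch4o _ hige (by omega), Finset.card_empty]
            rfl
  have hdegseq : degSeq G = Finset.univ.val.map d := by
    unfold degSeq
    exact Multiset.map_congr rfl (fun i _ => hdeg i)
  -- lower bound on domination number
  set k0 := n / 2 with hk0def
  have hk0m : k0 = B + m2 := by omega
  have hva_lt : ∀ i : Fin k0, (if (i : ℕ) < B then B + (i : ℕ)
      else 2 * B + ρ + 2 * ((i : ℕ) - B)) < n := by
    intro i
    have := i.isLt
    split_ifs <;> omega
  have hwa_lt : ∀ i : Fin k0, (if (i : ℕ) < B then (i : ℕ)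
      else 2 * B + ρ + 2 * ((i : ℕ) - B) + 1) < n := by
    intro i
    have := i.isLt
    split_ifs <;> omega
  set v : Fin k0 → Fin n := fun i => ⟨_, hva_lt i⟩ with hvdef
  set w : Fin k0 → Fin n := fun i => ⟨_, hwa_lt i⟩ with hwdef
  have hlow : k0 ≤ domNum G := by
    apply F10.domNum_lower G k0 v (fun i => {v i, w i})
    · intro i
      exact Set.mem_insert _ _
    · intro i x hadj
      rw [hGdef, F10.pg_adj hqlt] at hadj
      by_cases hiB : (i : ℕ) < B
      · have hvv : ((v i : Fin n) : ℕ) = B + (i : ℕ) := by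
          simp only [hvdef, if_pos hiB]
        have hwv : ((w i : Fin n) : ℕ) = (i : ℕ) := by
          simp only [hwdef, if_pos hiB]
        rcases hadj with h | h
        · rw [hvv, hq2 (B + (i : ℕ)) (by omega) (by omega)] at h
          have hx := Option.some_injective _ h
          right
          have : x = w i := Fin.ext (by omega)
          simp [this]
        · exfalso
          have hxmem : (x : ℕ) ∈ (Finset.range n).filter
              fun t => q t = some ((v i : Fin n) : ℕ) := by
            simp only [Finset.mem_filter, Finset.mem_range]
            exact ⟨x.isLt, h⟩
          rw [hch_mid _ (by omega) (by omega)] at hxmem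
          simp at hxmem
      · have hvv : ((v i : Fin n) : ℕ) = 2 * B + ρ + 2 * ((i : ℕ) - B) := by
          simp only [hvdef, if_neg hiB]
        have hwv : ((w i : Fin n) : ℕ) = 2 * B + ρ + 2 * ((i : ℕ) - B) + 1 := by
          simp only [hwdef, if_neg hiB]
        rcases hadj with h | h
        · exfalso
          rw [hvv, hq4even _ (by omega) (by omega)] at h
          simp at h
        · have hxmem : (x : ℕ) ∈ (Finset.range n).filter
              fun t => q t = some ((v i : Fin n) : ℕ) := by
            simp only [Finset.mem_filter, Finset.mem_range]
            exact ⟨x.isLt, h⟩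
          rw [hvv] at hxmem
          rw [hch4e _ (by omega) (by rw [← hvv]; exact (v i).isLt) (by omega)] at hxmem
          simp only [Finset.mem_singleton] at hxmem
          right
          have : x = w i := Fin.ext (by omega)
          simp [this]
    · intro i i' hne x hxi hxi'
      have hvalne : (i : ℕ) ≠ (i' : ℕ) := fun h => hne (Fin.ext h)
      have hxv : (x : ℕ) = (if (i : ℕ) < B then B + (i : ℕ)
            else 2 * B + ρ + 2 * ((i : ℕ) - B)) ∨
          (x : ℕ) = (if (i : ℕ) < B then (i : ℕ)
            else 2 * B + ρ + 2 * ((i : ℕ) - B) + 1) := by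
        rcases hxi with rfl | hxi
        · left; simp [hvdef]
        · right
          simp only [Set.mem_singleton_iff] at hxi
          subst hxi
          simp [hwdef]
      have hxv' : (x : ℕ) = (if (i' : ℕ) < B then B + (i' : ℕ)
            else 2 * B + ρ + 2 * ((i' : ℕ) - B)) ∨
          (x : ℕ) = (if (i' : ℕ) < B then (i' : ℕ)
            else 2 * B + ρ + 2 * ((i' : ℕ) - B) + 1) := by
        rcases hxi' with rfl | hxi'
        · left; simp [hvdef]
        · right
          simp only [Set.mem_singleton_iff] at hxi'
          subst hxi'
          simp [hwdef]
      by_cases hiB : (i : ℕ) < B <;> by_cases hiB' : (i' : ℕ) < B <;>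
        simp only [if_pos, if_neg, hiB, hiB', if_true, if_false] at hxv hxv' <;>
        omega
  have hdom : domNum G = n / 2 := by
    have hup := upper G hdegseq
    omega
  constructor
  · exact ⟨G, F10.pg_acyclic hqlt, hdegseq, hdom⟩
  · rintro m ⟨G', -, hds', rfl⟩
    exact upper G' hds'
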